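/- Let m ≥ 1, let y ∈ ℝ^m be sorted in nonincreasing order y_1 ≥ ⋯ ≥ y_m, let ρ = max{ i ∈ [m] : y_i − (1/i)(Σ_{j=1}^i y_j − 1) > 0 }, and let λ = (1/ρ)(Σ_{i=1}^ρ y_i − 1). Then y_i − λ > 0 for every i ≤ ρ, and y_i − λ ≤ 0 for every i > ρ. -/

import Mathlib

/-- Threshold property of the index `ρ` in the simplex-projection algorithm:
with `y` sorted nonincreasingly, `ρ` the largest index with
`y_ρ − (1/ρ)(∑_{j≤ρ} y_j − 1) > 0`, and `λ = (1/ρ)(∑_{i≤ρ} y_i − 1)`, one has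
`y_i − λ > 0` for `i ≤ ρ` and `y_i − λ ≤ 0` for `i > ρ`. -/
theorem simplex_projection_rho_threshold
    (m : ℕ) (hm : 1 ≤ m) (y : Fin m → ℝ)
    (hsorted : ∀ i j : Fin m, i ≤ j → y j ≤ y i)
    (ρ : Fin m)
    (hρmem : 0 < y ρ - (1 / ((ρ : ℕ) + 1 : ℝ)) * ((∑ j ∈ Finset.Iic ρ, y j) - 1))
    (hρmax : ∀ i : Fin m,
      0 < y i - (1 / ((i : ℕ) + 1 : ℝ)) * ((∑ j ∈ Finset.Iic i, y j) - 1) → i ≤ ρ)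
    (l : ℝ) (hl : l = (1 / ((ρ : ℕ) + 1 : ℝ)) * ((∑ i ∈ Finset.Iic ρ, y i) - 1)) :
    (∀ i : Fin m, i ≤ ρ → 0 < y i - l) ∧ (∀ i : Fin m, ρ < i → y i - l ≤ 0) := by
  have hρpos : (0:ℝ) < ((ρ : ℕ) : ℝ) + 1 := by positivity
  have hlρ : (∑ i ∈ Finset.Iic ρ, y i) - 1 = (((ρ : ℕ) : ℝ) + 1) * l := by
    rw [hl]; field_simp
  have hylρ : l < y ρ := by
    have h0 : 1 / (((ρ:ℕ):ℝ)+1) * ((((ρ:ℕ):ℝ)+1) * l) = l := by field_simp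
    rw [hlρ, h0] at hρmem; linarith
  constructor
  · intro i hi
    have := hsorted i ρ hi
    linarith
  · intro i hi
    have key : ∀ n : ℕ, (ρ : ℕ) ≤ n → ∀ h : n < m,
        ((ρ : ℕ) < n → y ⟨n, h⟩ ≤ l) ∧
        (∑ j ∈ Finset.Iic (⟨n, h⟩ : Fin m), y j) - 1 ≤ ((n : ℝ) + 1) * l := by
      intro n hn
      induction n, hn using Nat.le_induction with
      | base =>
        intro h
        have he : (⟨(ρ : ℕ), h⟩ : Fin m) = ρ := Fin.ext rfl
        rw [he]
        exact ⟨fun hc => absurd hc (lt_irrefl _), le_of_eq hlρ⟩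
      | succ n hn IH =>
        intro h
        have h' : n < m := Nat.lt_of_succ_lt h
        obtain ⟨-, IH2⟩ := IH h'
        set i' : Fin m := ⟨n + 1, h⟩ with hi'
        set i0 : Fin m := ⟨n, h'⟩ with hi0
        have hsum : (∑ j ∈ Finset.Iic i', y j) = y i' + ∑ j ∈ Finset.Iic i0, y j := by
          have hset : Finset.Iic i' = insert i' (Finset.Iic i0) := by
            ext j
            simp only [Finset.mem_Iic, Finset.mem_insert, Fin.le_def, Fin.ext_iff, hi', hi0]
            omega
          rw [hset, Finset.sum_insert]
          simp only [Finset.mem_Iic, Fin.le_def, hi', hi0]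
          omega
        have hnotle : ¬ i' ≤ ρ := by
          simp only [Fin.le_def, hi']
          omega
        have hf : ¬ (0 < y i' - (1 / (((i' : ℕ) : ℝ) + 1)) * ((∑ j ∈ Finset.Iic i', y j) - 1)) :=
          fun hc => hnotle (hρmax i' hc)
        push_neg at hf
        have hcast : ((i' : ℕ) : ℝ) = (n : ℝ) + 1 := by simp [hi']
        rw [hcast, hsum] at hf
        have hn2 : (0:ℝ) < (n : ℝ) + 1 + 1 := by positivity
        -- from hf : y i' - (1/((n:ℝ)+2)) * (y i' + S - 1) ≤ 0
        have hmul : ((n:ℝ) + 1 + 1) * y i' ≤ y i' + (∑ j ∈ Finset.Iic i0, y j) - 1 := by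
          have := mul_le_mul_of_nonneg_left hf (le_of_lt hn2)
          rw [mul_sub] at this
          rw [mul_comm, ← mul_assoc, mul_one_div, div_self (ne_of_gt hn2), one_mul] at this
          linarith
        have hyile : y i' ≤ l := by
          have h1 : ((n:ℝ) + 1) * y i' ≤ ((n:ℝ) + 1) * l := by linarith
          have hpos : (0:ℝ) < (n : ℝ) + 1 := by positivity
          exact le_of_mul_le_mul_left h1 hpos
        refine ⟨fun _ => hyile, ?_⟩
        rw [hsum]
        push_cast
        linarith
    have hle : (ρ : ℕ) ≤ (i : ℕ) := le_of_lt hi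
    obtain ⟨h1, -⟩ := key (i : ℕ) hle i.isLt
    have he : (⟨(i : ℕ), i.isLt⟩ : Fin m) = i := Fin.ext rfl
    rw [he] at h1
    have := h1 hi
    linarith
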